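/- Let S_n be the elephant random walk with memory parameter p ∈ (0,1) and first-step parameter q ∈ [0,1], and set α = 2p−1. Then, as n → ∞: E[(S_n)^2] ~ n/(1−2α) if −1 < α < 1/2; E[(S_n)^2] ~ n log n if α = 1/2; and E[(S_n)^2] ~ n^{2α}/((2α−1)Γ(2α)) if 1/2 < α < 1, where x_n ~ y_n means x_n/y_n → 1. -/

import Mathlib

open MeasureTheory ProbabilityTheory Filter Asymptotics

noncomputable section

/-- The σ-algebra 𝓕ₙ = σ(X₁, …, Xₙ) generated by the first `n` steps. -/
def erwFiltration {Ω : Type*} (X : ℕ → Ω → ℝ) (n : ℕ) : MeasurableSpace Ω :=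
  ⨆ i ∈ Finset.Icc 1 n, MeasurableSpace.comap (X i) inferInstance

/-- The position `Sₙ = X₁ + ⋯ + Xₙ` of the walk. -/
def erwS {Ω : Type*} (X : ℕ → Ω → ℝ) (n : ℕ) (ω : Ω) : ℝ :=
  ∑ i ∈ Finset.Icc 1 n, X i ω

/-- `X` is an elephant random walk (sequence of ±1 steps) with memory parameter
`p ∈ (0,1)` and first-step parameter `q ∈ [0,1]`:  `X₁ = 1` with probability `q`
(and `= -1` with probability `1-q`), and given `𝓕ₙ`, the step `X_{n+1}` equals `±1`
with conditional probability `(1 ± α Sₙ/n)/2`, where `α = 2p-1`. -/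
structure IsERW {Ω : Type*} [MeasurableSpace Ω] (μ : Measure Ω)
    (p q : ℝ) (X : ℕ → Ω → ℝ) : Prop where
  hp : p ∈ Set.Ioo (0:ℝ) 1
  hq : q ∈ Set.Icc (0:ℝ) 1
  prob : IsProbabilityMeasure μ
  meas : ∀ n, Measurable (X n)
  pm_one : ∀ n, 1 ≤ n → ∀ᵐ ω ∂μ, X n ω = 1 ∨ X n ω = -1
  first_step : μ {ω | X 1 ω = 1} = ENNReal.ofReal q
  cond : ∀ n, 1 ≤ n →
    μ[({ω' | X (n + 1) ω' = 1}.indicator fun _ => (1:ℝ)) | erwFiltration X n]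
      =ᵐ[μ] fun ω => (1 + (2 * p - 1) * erwS X n ω / n) / 2

/-- The odd double factorial `(2m-1)!! = 1·3·⋯·(2m-1)`. -/
def doubleFactOdd (m : ℕ) : ℝ := ∏ j ∈ Finset.range m, (2 * (j:ℝ) + 1)

end

namespace ERWAux
open Topology


noncomputable def gprod (β : ℝ) (m : ℕ) : ℝ := ∏ k ∈ Finset.Icc 1 m, (((k:ℝ) + β)/k)

lemma gprod_zero (β : ℝ) : gprod β 0 = 1 := by simp [gprod]

lemma gprod_succ (β : ℝ) (m : ℕ) :
    gprod β (m+1) = gprod β m * ((((m:ℝ)+1) + β)/((m:ℝ)+1)) := by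
  rw [gprod, gprod, Finset.prod_Icc_succ_top (Nat.le_add_left 1 m)]
  push_cast
  ring

lemma gprod_pos {β : ℝ} (hβ : -1 < β) (m : ℕ) : 0 < gprod β m := by
  refine Finset.prod_pos fun k hk => ?_
  have hk1 : 1 ≤ k := (Finset.mem_Icc.mp hk).1
  have : (1:ℝ) ≤ (k:ℝ) := by exact_mod_cast hk1
  have h1 : (0:ℝ) < k := by linarith
  have h2 : (0:ℝ) < (k:ℝ) + β := by linarith
  positivity

lemma closed_form {β : ℝ} (hβ : β ≠ 1) {a : ℕ → ℝ} (h1 : a 1 = 1)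
    (hrec : ∀ n : ℕ, 1 ≤ n → a (n+1) = (1 + β/n) * a n + 1) :
    ∀ m : ℕ, a (m+1) = (((m:ℝ)+1) - β * gprod β m)/(1-β) := by
  intro m
  induction m with
  | zero =>
    have hb : (1:ℝ) - β ≠ 0 := by intro h; apply hβ; linarith
    rw [h1]; rw [gprod_zero]; push_cast; field_simp
    ring
  | succ m ih =>
    have hne : ((m:ℝ)+1) ≠ 0 := by positivity
    have hb : (1:ℝ) - β ≠ 0 := by intro h; apply hβ; linarith
    rw [hrec (m+1) (Nat.le_add_left 1 m), ih, gprod_succ]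
    push_cast
    field_simp
    ring

lemma closed_form_one {a : ℕ → ℝ} (h1 : a 1 = 1)
    (hrec : ∀ n : ℕ, 1 ≤ n → a (n+1) = (1 + 1/n) * a n + 1) :
    ∀ m : ℕ, a (m+1) = ((m:ℝ)+1) * ((harmonic (m+1) : ℚ) : ℝ) := by
  intro m
  induction m with
  | zero => simp [h1, harmonic_succ]
  | succ m ih =>
    have hne : ((m:ℝ)+1) ≠ 0 := by positivity
    have hne2 : ((m:ℝ)+2) ≠ 0 := by positivity
    rw [hrec (m+1) (Nat.le_add_left 1 m), ih, harmonic_succ (m+1)]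
    push_cast
    field_simp

noncomputable def pprod (β : ℝ) (m : ℕ) : ℝ := ∏ k ∈ Finset.Icc 1 m, (((k:ℝ) + β)/((k:ℝ)+1))

noncomputable def ssum (m : ℕ) : ℝ := ∑ k ∈ Finset.Icc 2 m, (1/((k:ℝ)+1))

lemma pprod_succ (β : ℝ) (m : ℕ) :
    pprod β (m+1) = pprod β m * ((((m:ℝ)+1) + β)/((m:ℝ)+2)) := by
  rw [pprod, pprod, Finset.prod_Icc_succ_top (Nat.le_add_left 1 m)]
  push_cast; ring

lemma ssum_succ (m : ℕ) (hm : 1 ≤ m) : ssum (m+1) = ssum m + 1/((m:ℝ)+2) := by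
  rw [ssum, ssum, Finset.sum_Icc_succ_top (by omega : 2 ≤ m+1)]
  push_cast
  norm_num
  ring

lemma gprod_eq_pprod (β : ℝ) (m : ℕ) : gprod β m = ((m:ℝ)+1) * pprod β m := by
  induction m with
  | zero => simp [gprod_zero, pprod]
  | succ m ih =>
    have hne : ((m:ℝ)+1) ≠ 0 := by positivity
    have hne2 : ((m:ℝ)+2) ≠ 0 := by positivity
    rw [gprod_succ, pprod_succ, ih]
    push_cast
    field_simp
    ring

lemma pprod_abs_le {β : ℝ} (h2 : -2 < β) :
    ∀ m : ℕ, 1 ≤ m → |pprod β m| ≤ (|1+β|/2) * Real.exp ((β-1) * ssum m) := by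
  intro m hm
  induction m, hm using Nat.le_induction with
  | base =>
    have : pprod β 1 = (1+β)/2 := by
      rw [pprod]; rw [Finset.Icc_self, Finset.prod_singleton]; norm_num
    have hs : ssum 1 = 0 := by rw [ssum]; simp
    rw [this, hs, abs_div]
    simp [abs_of_nonneg]
  | succ m hm ih =>
    have hm1 : (1:ℝ) ≤ (m:ℝ) := by exact_mod_cast hm
    have hfac_nonneg : 0 ≤ (((m:ℝ)+1) + β)/((m:ℝ)+2) := by
      apply div_nonneg <;> linarith
    have hfac_le : (((m:ℝ)+1) + β)/((m:ℝ)+2) ≤ Real.exp ((β-1)/((m:ℝ)+2)) := by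
      have := Real.add_one_le_exp ((β-1)/((m:ℝ)+2))
      have h0 : (0:ℝ) < (m:ℝ)+2 := by linarith
      rw [div_le_iff₀ h0] at *
      calc ((m:ℝ)+1) + β = (β-1)/((m:ℝ)+2) * ((m:ℝ)+2) + ((m:ℝ)+2) := by field_simp; ring
        _ ≤ Real.exp ((β-1)/((m:ℝ)+2)) * ((m:ℝ)+2) := by nlinarith [Real.add_one_le_exp ((β-1)/((m:ℝ)+2))]
    rw [pprod_succ, ssum_succ m hm, abs_mul]
    calc |pprod β m| * |(((m:ℝ)+1) + β)/((m:ℝ)+2)|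
        ≤ (|1+β|/2) * Real.exp ((β-1) * ssum m) * Real.exp ((β-1)/((m:ℝ)+2)) := by
          rw [abs_of_nonneg hfac_nonneg]
          apply mul_le_mul ih hfac_le hfac_nonneg (by positivity)
      _ = (|1+β|/2) * Real.exp ((β-1) * (ssum m + 1/((m:ℝ)+2))) := by
          rw [mul_assoc, ← Real.exp_add]; ring_nf

lemma tendsto_ssum : Tendsto ssum atTop atTop := by
  have h0 := Real.tendsto_sum_range_one_div_nat_succ_atTop
  have h1 : Tendsto (fun m : ℕ => (∑ i ∈ Finset.range (m+1), (1:ℝ)/(i+1)) - 3/2) atTop atTop :=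
    tendsto_atTop_add_const_right _ _ (h0.comp (tendsto_add_atTop_nat 1))
  apply h1.congr'
  filter_upwards [eventually_ge_atTop 1] with m hm
  induction m, hm using Nat.le_induction with
  | base => rw [ssum]; norm_num
  | succ m hm ih =>
    rw [ssum_succ m hm, ← ih, Finset.sum_range_succ]
    push_cast; ring

lemma tendsto_pprod {β : ℝ} (h2 : -2 < β) (h1 : β < 1) :
    Tendsto (fun m : ℕ => pprod β m) atTop (𝓝 0) := by
  have hexp : Tendsto (fun m : ℕ => (|1+β|/2) * Real.exp ((β-1) * ssum m)) atTop (𝓝 0) := by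
    have hb : Tendsto (fun m : ℕ => (β-1) * ssum m) atTop atBot := by
      have := tendsto_ssum.const_mul_atTop_of_neg (by linarith : β - 1 < 0)
      exact this
    have := Real.tendsto_exp_atBot.comp hb
    simpa using this.const_mul (|1+β|/2)
  apply squeeze_zero_norm' _ hexp
  filter_upwards [eventually_ge_atTop 1] with m hm
  exact pprod_abs_le h2 m hm

lemma prod_range_eq (β : ℝ) (m : ℕ) :
    ∏ j ∈ Finset.range (m+1), (β + (j:ℝ)) = β * (m.factorial : ℝ) * gprod β m := by
  induction m with
  | zero => simp [gprod_zero]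
  | succ m ih =>
    rw [Finset.prod_range_succ, ih, gprod_succ, Nat.factorial_succ]
    have hne : ((m:ℝ)+1) ≠ 0 := by positivity
    push_cast
    field_simp
    ring

lemma gammaSeq_eq {β : ℝ} (hβ : 1 < β) (m : ℕ) (hm : 1 ≤ m) :
    gprod β m / (m:ℝ)^β = (β * Real.GammaSeq β m)⁻¹ := by
  have hg := gprod_pos (by linarith : (-1:ℝ) < β) m
  have hmp : (0:ℝ) < (m:ℝ) := by
    have : (1:ℝ) ≤ (m:ℝ) := by exact_mod_cast hm
    linarith
  have hrp : (0:ℝ) < (m:ℝ)^β := Real.rpow_pos_of_pos hmp β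
  have hfac : ((m.factorial : ℝ)) ≠ 0 := by
    exact_mod_cast m.factorial_pos.ne'
  have hβ0 : β ≠ 0 := by linarith
  rw [Real.GammaSeq, prod_range_eq]
  field_simp

lemma tendsto_gprod_div_rpow {β : ℝ} (hβ : 1 < β) :
    Tendsto (fun m : ℕ => gprod β m / (m:ℝ)^β) atTop (𝓝 ((β * Real.Gamma β)⁻¹)) := by
  have hΓ : (0:ℝ) < Real.Gamma β := Real.Gamma_pos_of_pos (by linarith)
  have h1 : Tendsto (fun m : ℕ => β * Real.GammaSeq β m) atTop (𝓝 (β * Real.Gamma β)) :=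
    (Real.GammaSeq_tendsto_Gamma β).const_mul β
  have h2 := h1.inv₀ (by positivity)
  apply h2.congr'
  filter_upwards [eventually_ge_atTop 1] with m hm
  exact (gammaSeq_eq hβ m hm).symm

lemma equiv_case1 {β : ℝ} (h2 : -2 < β) (h1 : β < 1) {a : ℕ → ℝ}
    (ha : ∀ m : ℕ, a (m+1) = (((m:ℝ)+1) - β * gprod β m)/(1-β)) :
    a ~[atTop] fun n : ℕ => (n:ℝ)/(1-β) := by
  have hb : (1:ℝ) - β ≠ 0 := by intro hc; linarith
  rw [Asymptotics.isEquivalent_iff_tendsto_one (by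
    filter_upwards [eventually_ge_atTop 1] with n hn
    have hn0 : (0:ℝ) < (n:ℝ) := by
      have : (1:ℝ) ≤ (n:ℝ) := by exact_mod_cast hn
      linarith
    exact div_ne_zero hn0.ne' hb)]
  have ht : Tendsto (fun n : ℕ => 1 - β * pprod β (n-1)) atTop (𝓝 1) := by
    have hc := ((tendsto_pprod h2 h1).comp (tendsto_sub_atTop_nat 1)).const_mul β
    simpa using tendsto_const_nhds.sub hc
  refine ht.congr' ?_
  filter_upwards [eventually_ge_atTop 1] with n hn
  obtain ⟨m, rfl⟩ : ∃ m, n = m+1 := ⟨n-1, by omega⟩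
  have hne : ((m:ℝ)+1) ≠ 0 := by positivity
  simp only [Pi.div_apply, Nat.add_sub_cancel]
  rw [ha m, gprod_eq_pprod]
  push_cast
  field_simp

lemma equiv_case2 {a : ℕ → ℝ}
    (ha : ∀ m : ℕ, a (m+1) = ((m:ℝ)+1) * ((harmonic (m+1) : ℚ) : ℝ)) :
    a ~[atTop] fun n : ℕ => (n:ℝ) * Real.log n := by
  rw [Asymptotics.isEquivalent_iff_tendsto_one (by
    filter_upwards [eventually_ge_atTop 2] with n hn
    have h2 : (2:ℝ) ≤ (n:ℝ) := by exact_mod_cast hn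
    have hl : 0 < Real.log n := Real.log_pos (by linarith)
    exact mul_ne_zero (by linarith) hl.ne')]
  have hlog : Tendsto (fun n : ℕ => Real.log n) atTop atTop :=
    Real.tendsto_log_atTop.comp tendsto_natCast_atTop_atTop
  have h0 : Tendsto (fun n : ℕ => Real.eulerMascheroniSeq' n / Real.log n + 1)
      atTop (𝓝 (0+1)) :=
    (Real.tendsto_eulerMascheroniSeq'.div_atTop hlog).add tendsto_const_nhds
  rw [show ((0:ℝ)+1) = 1 by norm_num] at h0
  refine h0.congr' ?_
  filter_upwards [eventually_ge_atTop 2] with n hn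
  obtain ⟨m, rfl⟩ : ∃ m, n = m+1 := ⟨n-1, by omega⟩
  have h2 : (2:ℝ) ≤ ((m:ℝ)+1) := by exact_mod_cast hn
  have hl : 0 < Real.log ((m:ℝ)+1) := Real.log_pos (by linarith)
  have hE : Real.eulerMascheroniSeq' (m+1)
      = ((harmonic (m+1) : ℚ) : ℝ) - Real.log ((m+1:ℕ):ℝ) := by
    rw [Real.eulerMascheroniSeq', if_neg (Nat.succ_ne_zero m)]
  simp only [Pi.div_apply]
  rw [ha m, hE]
  push_cast
  field_simp
  ring

lemma equiv_case3 {β : ℝ} (hβ1 : 1 < β) {a : ℕ → ℝ}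
    (ha : ∀ m : ℕ, a (m+1) = (((m:ℝ)+1) - β * gprod β m)/(1-β)) :
    a ~[atTop] fun n : ℕ => (n:ℝ)^β / ((β-1) * Real.Gamma β) := by
  have hΓ : (0:ℝ) < Real.Gamma β := Real.Gamma_pos_of_pos (by linarith)
  have hb1 : β - 1 ≠ 0 := by intro hc; linarith
  have hb1' : (1:ℝ) - β ≠ 0 := by intro hc; linarith
  rw [Asymptotics.isEquivalent_iff_tendsto_one (by
    filter_upwards [eventually_ge_atTop 1] with n hn
    have hn0 : (0:ℝ) < (n:ℝ) := by
      have : (1:ℝ) ≤ (n:ℝ) := by exact_mod_cast hn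
      linarith
    exact div_ne_zero (Real.rpow_pos_of_pos hn0 β).ne' (mul_ne_zero hb1 hΓ.ne'))]
  have c1 : Tendsto (fun n : ℕ => gprod β (n-1) / ((n-1 : ℕ):ℝ)^β) atTop
      (𝓝 ((β * Real.Gamma β)⁻¹)) :=
    (tendsto_gprod_div_rpow hβ1).comp (tendsto_sub_atTop_nat 1)
  have c2 : Tendsto (fun n : ℕ => (1 - 1/(n:ℝ))^β) atTop (𝓝 1) := by
    have hc : Tendsto (fun n : ℕ => 1 - 1/(n:ℝ)) atTop (𝓝 1) := by
      simpa using tendsto_const_nhds.sub (tendsto_one_div_atTop_nhds_zero_nat (𝕜 := ℝ))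
    have := hc.rpow_const (Or.inr (le_of_lt (by linarith : (0:ℝ) < β)))
    simpa using this
  have c3 : Tendsto (fun n : ℕ => ((n:ℝ))^(1-β)) atTop (𝓝 0) := by
    have hr := (tendsto_rpow_neg_atTop (by linarith : (0:ℝ) < β - 1)).comp
      tendsto_natCast_atTop_atTop
    simpa [neg_sub, Function.comp_def] using hr
  have hT : Tendsto (fun n : ℕ =>
      β * Real.Gamma β * (gprod β (n-1)/((n-1:ℕ):ℝ)^β) * (1 - 1/(n:ℝ))^β
        - Real.Gamma β * ((n:ℝ))^(1-β)) atTop (𝓝 1) := by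
    have hc := ((c1.const_mul (β * Real.Gamma β)).mul c2).sub (c3.const_mul (Real.Gamma β))
    have he : β * Real.Gamma β * (β * Real.Gamma β)⁻¹ * 1 - Real.Gamma β * 0 = 1 := by
      field_simp
      ring
    rw [he] at hc
    exact hc
  refine hT.congr' ?_
  filter_upwards [eventually_ge_atTop 2] with n hn
  obtain ⟨m, rfl⟩ : ∃ m, n = m + 2 := ⟨n - 2, by omega⟩
  have hm1 : (0:ℝ) < (m:ℝ)+1 := by positivity
  have hm2 : (0:ℝ) < (m:ℝ)+2 := by positivity
  have hy : (0:ℝ) < ((m:ℝ)+1)^β := Real.rpow_pos_of_pos hm1 β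
  have hx : (0:ℝ) < ((m:ℝ)+2)^β := Real.rpow_pos_of_pos hm2 β
  have hsub : m + 2 - 1 = m + 1 := rfl
  have ecast2 : ((m+2:ℕ):ℝ) = (m:ℝ)+2 := by push_cast; ring
  have ecast1 : ((m+1:ℕ):ℝ) = (m:ℝ)+1 := by push_cast; ring
  have hfrac : (1 - 1/((m+2:ℕ):ℝ))^β = ((m:ℝ)+1)^β / ((m:ℝ)+2)^β := by
    rw [ecast2, show (1 - 1/((m:ℝ)+2)) = ((m:ℝ)+1)/((m:ℝ)+2) by field_simp; ring,
      Real.div_rpow hm1.le hm2.le]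
  have hpow : ((m+2:ℕ):ℝ)^((1:ℝ)-β) = ((m:ℝ)+2) / ((m:ℝ)+2)^β := by
    rw [ecast2, Real.rpow_sub hm2, Real.rpow_one]
  show β * Real.Gamma β * (gprod β (m+2-1)/((m+2-1:ℕ):ℝ)^β) * (1 - 1/((m+2:ℕ):ℝ))^β
      - Real.Gamma β * ((m+2:ℕ):ℝ)^((1:ℝ)-β)
    = a (m+2) / (((m+2:ℕ):ℝ)^β / ((β-1) * Real.Gamma β))
  rw [hsub, hfrac, hpow, ecast1, ecast2, show m+2 = (m+1)+1 from rfl, ha (m+1)]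
  push_cast
  field_simp
  ring



variable {Ω : Type*} {mΩ : MeasurableSpace Ω} {μ : Measure Ω} {p q : ℝ} {X : ℕ → Ω → ℝ}

lemma erw_one (h : IsERW μ p q X) : ∫ ω, (erwS X 1 ω)^2 ∂μ = 1 := by
  haveI := h.prob
  have hae : ∀ᵐ ω ∂μ, (erwS X 1 ω)^2 = 1 := by
    filter_upwards [h.pm_one 1 le_rfl] with ω hω
    rw [erwS]; simp only [Finset.Icc_self, Finset.sum_singleton]
    rcases hω with h1|h1 <;> rw [h1] <;> norm_num
  rw [integral_congr_ae hae]; simp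

lemma erw_rec (h : IsERW μ p q X) (n : ℕ) (hn : 1 ≤ n) :
    ∫ ω, (erwS X (n+1) ω)^2 ∂μ
      = (1 + 2*(2*p-1)/n) * ∫ ω, (erwS X n ω)^2 ∂μ + 1 := by
  haveI := h.prob
  have hmle : erwFiltration X n ≤ mΩ := by
    refine iSup₂_le fun i _ => ?_
    exact measurable_iff_comap_le.mp (h.meas i)
  have hSm : Measurable[erwFiltration X n] (erwS X n) := by
    have : ∀ i ∈ Finset.Icc 1 n, Measurable[erwFiltration X n] (X i) := by
      intro i hi
      refine measurable_iff_comap_le.mpr ?_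
      exact le_iSup₂ (f := fun i (_ : i ∈ Finset.Icc 1 n) =>
        MeasurableSpace.comap (X i) inferInstance) i hi
    exact Finset.measurable_sum _ this
  have hSmeas : Measurable (erwS X n) := hSm.mono hmle le_rfl
  have hXb : ∀ k, 1 ≤ k → ∀ᵐ ω ∂μ, |X k ω| ≤ 1 ∧ (X k ω)^2 = 1 := by
    intro k hk
    filter_upwards [h.pm_one k hk] with ω hω
    rcases hω with h1 | h1 <;> rw [h1] <;> norm_num
  have hSb : ∀ᵐ ω ∂μ, |erwS X n ω| ≤ n := by
    have hball : ∀ᵐ ω ∂μ, ∀ i ∈ (Finset.Icc 1 n : Finset ℕ), |X i ω| ≤ 1 := by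
      rw [Filter.eventually_all_finset]
      intro i hi
      exact (hXb i (Finset.mem_Icc.mp hi).1).mono fun ω hh => hh.1
    filter_upwards [hball] with ω hω
    calc |erwS X n ω| ≤ ∑ i ∈ Finset.Icc 1 n, |X i ω| :=
          Finset.abs_sum_le_sum_abs _ _
      _ ≤ ∑ _i ∈ Finset.Icc 1 n, (1:ℝ) := Finset.sum_le_sum hω
      _ = n := by simp [Nat.card_Icc]
  have hint : ∀ (f : Ω → ℝ) (C : ℝ), Measurable f → (∀ᵐ ω ∂μ, |f ω| ≤ C) →
      Integrable f μ := by
    intro f C hf hb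
    exact (integrable_const C).mono' hf.aestronglyMeasurable
      (by simpa [Real.norm_eq_abs] using hb)
  have hSint : Integrable (erwS X n) μ := hint _ n hSmeas hSb
  have hS2int : Integrable (fun ω => (erwS X n ω)^2) μ := by
    refine hint _ ((n:ℝ)^2) (hSmeas.pow_const 2) ?_
    filter_upwards [hSb] with ω hω
    rw [abs_of_nonneg (sq_nonneg _)]
    calc (erwS X n ω)^2 = |erwS X n ω|^2 := (sq_abs _).symm
      _ ≤ (n:ℝ)^2 := by nlinarith [abs_nonneg (erwS X n ω)]
  have hA : MeasurableSet {ω | X (n+1) ω = 1} :=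
    (h.meas (n+1)) (measurableSet_singleton 1)
  set I : Ω → ℝ := {ω' | X (n + 1) ω' = 1}.indicator fun _ => (1:ℝ) with hIdef
  have hImeas : Measurable I := measurable_const.indicator hA
  have hIb : ∀ ω, |I ω| ≤ 1 := by
    intro ω
    rw [hIdef, Set.indicator_apply]
    split_ifs <;> norm_num
  have hIint : Integrable I μ := hint _ 1 hImeas (Eventually.of_forall hIb)
  have hSIint : Integrable (erwS X n * I) μ := by
    refine hint _ n (hSmeas.mul hImeas) ?_
    filter_upwards [hSb] with ω hω
    calc |(erwS X n * I) ω| = |erwS X n ω| * |I ω| := abs_mul _ _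
      _ ≤ (n:ℝ) * 1 := by
          exact mul_le_mul hω (hIb ω) (abs_nonneg _) (Nat.cast_nonneg n)
      _ = n := mul_one _
  have hpull := condExp_mul_of_stronglyMeasurable_left (μ := μ) hSm.stronglyMeasurable hSIint hIint
  have hcond := h.cond n hn
  have key : ∫ ω, erwS X n ω * I ω ∂μ
      = ∫ ω, erwS X n ω * ((1 + (2*p-1) * erwS X n ω / n)/2) ∂μ := by
    have h1 : ∫ ω, erwS X n ω * I ω ∂μ
        = ∫ ω, (μ[erwS X n * I | erwFiltration X n]) ω ∂μ :=
      (integral_condExp hmle).symm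
    rw [h1]
    apply integral_congr_ae
    filter_upwards [hpull, hcond] with ω e1 e2
    rw [e1, Pi.mul_apply, e2]
  have key2 : ∫ ω, erwS X n ω * I ω ∂μ
      = (1/2) * ∫ ω, erwS X n ω ∂μ
        + ((2*p-1)/(2*n)) * ∫ ω, (erwS X n ω)^2 ∂μ := by
    rw [key]
    have hfun : (fun ω => erwS X n ω * ((1 + (2*p-1) * erwS X n ω / n)/2))
        = fun ω => (1/2) * erwS X n ω + ((2*p-1)/(2*n)) * (erwS X n ω)^2 := by
      funext ω
      have hn' : ((n:ℝ)) ≠ 0 := Nat.cast_ne_zero.mpr (by omega)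
      field_simp
    rw [hfun, integral_add (hSint.const_mul _) (hS2int.const_mul _),
      integral_const_mul, integral_const_mul]
  have hXrep : ∀ᵐ ω ∂μ, X (n+1) ω = 2 * I ω - 1 := by
    filter_upwards [h.pm_one (n+1) (by omega)] with ω hω
    rcases hω with h1 | h1
    · rw [hIdef, Set.indicator_of_mem (show ω ∈ {ω' | X (n+1) ω' = 1} from h1)]
      rw [h1]; norm_num
    · rw [hIdef, Set.indicator_of_notMem, h1]
      · norm_num
      · intro hmem
        rw [Set.mem_setOf_eq, h1] at hmem
        norm_num at hmem
  have hSXint : Integrable (fun ω => erwS X n ω * X (n+1) ω) μ := by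
    refine hint _ n (hSmeas.mul (h.meas (n+1))) ?_
    filter_upwards [hSb, hXb (n+1) (by omega)] with ω h1 h2
    calc |erwS X n ω * X (n+1) ω| = |erwS X n ω| * |X (n+1) ω| := abs_mul _ _
      _ ≤ (n:ℝ) * 1 := mul_le_mul h1 h2.1 (abs_nonneg _) (Nat.cast_nonneg n)
      _ = n := mul_one _
  have hSX : ∫ ω, erwS X n ω * X (n+1) ω ∂μ
      = (2*p-1)/n * ∫ ω, (erwS X n ω)^2 ∂μ := by
    have e1 : ∫ ω, erwS X n ω * X (n+1) ω ∂μ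
        = ∫ ω, (2 * (erwS X n ω * I ω) - erwS X n ω) ∂μ := by
      apply integral_congr_ae
      filter_upwards [hXrep] with ω hω
      rw [hω]; ring
    have hSI2 : Integrable (fun ω => 2 * (erwS X n ω * I ω)) μ := hSIint.const_mul 2
    rw [e1, integral_sub hSI2 hSint, integral_const_mul, key2]
    have hn' : ((n:ℝ)) ≠ 0 := Nat.cast_ne_zero.mpr (by omega)
    field_simp
    ring
  have hXsq : ∫ ω, (X (n+1) ω)^2 ∂μ = 1 := by
    have : ∀ᵐ ω ∂μ, (X (n+1) ω)^2 = (fun _ => (1:ℝ)) ω :=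
      (hXb (n+1) (by omega)).mono fun ω hω => hω.2
    rw [integral_congr_ae this]; simp
  have hexpand : ∫ ω, (erwS X (n+1) ω)^2 ∂μ
      = ∫ ω, ((erwS X n ω)^2 + 2 * (erwS X n ω * X (n+1) ω) + (X (n+1) ω)^2) ∂μ := by
    refine integral_congr_ae (Eventually.of_forall fun ω => ?_)
    show (erwS X (n+1) ω)^2
      = (erwS X n ω)^2 + 2 * (erwS X n ω * X (n+1) ω) + (X (n+1) ω)^2
    have e : erwS X (n+1) ω = erwS X n ω + X (n+1) ω :=
      Finset.sum_Icc_succ_top (Nat.le_add_left 1 n) fun i => X i ω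
    rw [e]; ring
  have hX2int : Integrable (fun ω => (X (n+1) ω)^2) μ :=
    hint _ 1 ((h.meas (n+1)).pow_const 2) ((hXb (n+1) (by omega)).mono fun ω hω => by
      rw [hω.2]; norm_num)
  have i1 : ∫ ω, ((erwS X n ω)^2 + 2 * (erwS X n ω * X (n+1) ω) + (X (n+1) ω)^2) ∂μ
      = (∫ ω, ((erwS X n ω)^2 + 2 * (erwS X n ω * X (n+1) ω)) ∂μ)
        + ∫ ω, (X (n+1) ω)^2 ∂μ :=
    integral_add (hS2int.add (hSXint.const_mul 2)) hX2int
  have i2 : ∫ ω, ((erwS X n ω)^2 + 2 * (erwS X n ω * X (n+1) ω)) ∂μ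
      = (∫ ω, (erwS X n ω)^2 ∂μ) + ∫ ω, 2 * (erwS X n ω * X (n+1) ω) ∂μ :=
    integral_add hS2int (hSXint.const_mul 2)
  rw [hexpand, i1, i2, integral_const_mul, hSX, hXsq]
  have hn' : ((n:ℝ)) ≠ 0 := Nat.cast_ne_zero.mpr (by omega)
  field_simp


end ERWAux

/-- Asymptotics of the mean square displacement in the diffusive, marginally
superdiffusive, and superdiffusive regimes. -/
theorem stmt_11 {Ω : Type*} [MeasurableSpace Ω] (μ : MeasureTheory.Measure Ω)
    (p q α : ℝ) (X : ℕ → Ω → ℝ) (hERW : IsERW μ p q X) (hα : α = 2 * p - 1) :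
    (-1 < α → α < 1 / 2 →
      (fun n : ℕ => ∫ ω, (erwS X n ω) ^ 2 ∂μ) ~[atTop]
        fun n : ℕ => (n : ℝ) / (1 - 2 * α)) ∧
    (α = 1 / 2 →
      (fun n : ℕ => ∫ ω, (erwS X n ω) ^ 2 ∂μ) ~[atTop]
        fun n : ℕ => (n : ℝ) * Real.log n) ∧
    (1 / 2 < α → α < 1 →
      (fun n : ℕ => ∫ ω, (erwS X n ω) ^ 2 ∂μ) ~[atTop]
        fun n : ℕ => (n : ℝ) ^ (2 * α) / ((2 * α - 1) * Real.Gamma (2 * α))) := by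
  have hp := hERW.hp
  have h1 : (fun n : ℕ => ∫ ω, (erwS X n ω) ^ 2 ∂μ) 1 = 1 := ERWAux.erw_one hERW
  have hrec : ∀ n : ℕ, 1 ≤ n →
      (fun n : ℕ => ∫ ω, (erwS X n ω) ^ 2 ∂μ) (n+1)
        = (1 + (2*α)/n) * (fun n : ℕ => ∫ ω, (erwS X n ω) ^ 2 ∂μ) n + 1 := by
    intro n hn
    have h := ERWAux.erw_rec hERW n hn
    simpa [hα] using h
  refine ⟨?_, ?_, ?_⟩
  · intro hgt hlt
    have hclosed := ERWAux.closed_form (β := 2*α)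
      (a := fun n : ℕ => ∫ ω, (erwS X n ω) ^ 2 ∂μ) (by intro hc; linarith) h1 hrec
    exact ERWAux.equiv_case1 (by linarith) (by linarith) hclosed
  · intro heq
    have hrec1 : ∀ n : ℕ, 1 ≤ n →
        (fun n : ℕ => ∫ ω, (erwS X n ω) ^ 2 ∂μ) (n+1)
          = (1 + 1/(n:ℝ)) * (fun n : ℕ => ∫ ω, (erwS X n ω) ^ 2 ∂μ) n + 1 := by
      intro n hn
      have := hrec n hn
      rw [heq] at this
      norm_num at this ⊢
      convert this using 2
    have hclosed := ERWAux.closed_form_one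
      (a := fun n : ℕ => ∫ ω, (erwS X n ω) ^ 2 ∂μ) h1 hrec1
    exact ERWAux.equiv_case2 hclosed
  · intro hgt hlt
    have hclosed := ERWAux.closed_form (β := 2*α)
      (a := fun n : ℕ => ∫ ω, (erwS X n ω) ^ 2 ∂μ) (by intro hc; linarith) h1 hrec
    exact ERWAux.equiv_case3 (by linarith) hclosed
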